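/- Let V be an infinite-dimensional vector space over a field F. Then the subspace [I_{ℵ₀}, gl(V)] has codimension 2 in F·Id_V + I_{ℵ₀}. -/

import Mathlib

open Cardinal

variable (F V : Type*) [Field F] [AddCommGroup V] [Module F V]

/-- The ideal `I_α` of endomorphisms of rank `< α` (for an infinite cardinal `α`),
as a subspace of `End F V`. -/
def rankIdeal (α : Cardinal) (hα : ℵ₀ ≤ α) : Submodule F (Module.End F V) where
  carrier := {φ | LinearMap.rank φ < α}
  zero_mem' := by
    simp only [Set.mem_setOf_eq, LinearMap.rank_zero]
    exact lt_of_lt_of_le aleph0_pos hα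
  add_mem' := fun hf hg =>
    lt_of_le_of_lt (LinearMap.rank_add_le _ _) (Cardinal.add_lt_of_lt hα hf hg)
  smul_mem' := by
    intro c f hf
    have h1 : LinearMap.range (c • f) ≤ LinearMap.range f := by
      rintro x ⟨y, rfl⟩
      exact ⟨c • y, by simp⟩
    exact lt_of_le_of_lt (Submodule.rank_mono h1) hf

section Aux
variable {F V}

/-- Trace of an endomorphism via restriction to its range. -/
noncomputable def myTr (f : Module.End F V) : F :=
  LinearMap.trace F (LinearMap.range f)
    (f.restrict fun x _ => LinearMap.mem_range_self f x)

lemma myTr_eq (f : Module.End F V) (U : Submodule F V) [FiniteDimensional F U]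
    (hU : LinearMap.range f ≤ U) :
    myTr f = LinearMap.trace F U
      (f.restrict fun x _ => hU (LinearMap.mem_range_self f x)) := by
  haveI : FiniteDimensional F (LinearMap.range f) :=
    Submodule.finiteDimensional_of_le hU
  let a : U →ₗ[F] LinearMap.range f :=
    LinearMap.codRestrict _ (f ∘ₗ U.subtype) fun x => LinearMap.mem_range_self f _
  let b : (LinearMap.range f : Submodule F V) →ₗ[F] U := Submodule.inclusion hU
  have h1 : f.restrict (fun x _ => hU (LinearMap.mem_range_self f x)) = b ∘ₗ a := by
    ext x; rfl
  have h2 : f.restrict (fun x _ => LinearMap.mem_range_self f x) = a ∘ₗ b := by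
    ext x; rfl
  rw [myTr, h2, h1, LinearMap.trace_comp_comm']

lemma myTr_zero : myTr (0 : Module.End F V) = 0 := by
  have : ((0 : Module.End F V).restrict (p := LinearMap.range (0 : Module.End F V))
      fun x _ => LinearMap.mem_range_self (0 : Module.End F V) x) = 0 := by
    ext x; rfl
  rw [myTr, this, map_zero]

lemma myTr_add (f g : Module.End F V) [FiniteDimensional F (LinearMap.range f)]
    [FiniteDimensional F (LinearMap.range g)] :
    myTr (f + g) = myTr f + myTr g := by
  set U := LinearMap.range f ⊔ LinearMap.range g with hUdef
  have hf : LinearMap.range f ≤ U := le_sup_left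
  have hg : LinearMap.range g ≤ U := le_sup_right
  have hfg : LinearMap.range (f + g) ≤ U := by
    rintro x ⟨y, rfl⟩
    exact add_mem (hf (LinearMap.mem_range_self f y)) (hg (LinearMap.mem_range_self g y))
  rw [myTr_eq f U hf, myTr_eq g U hg, myTr_eq (f + g) U hfg]
  have : ((f + g).restrict (p := U) fun x _ => hfg (LinearMap.mem_range_self (f + g) x)) =
      (f.restrict (p := U) fun x _ => hf (LinearMap.mem_range_self f x)) +
      (g.restrict (p := U) fun x _ => hg (LinearMap.mem_range_self g x)) := by
    ext x
    simp [LinearMap.restrict_coe_apply]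
  rw [this, map_add]

lemma myTr_smul (c : F) (f : Module.End F V) [FiniteDimensional F (LinearMap.range f)] :
    myTr (c • f) = c * myTr f := by
  have hcf : LinearMap.range (c • f) ≤ LinearMap.range f := by
    rintro x ⟨y, rfl⟩
    exact ⟨c • y, by simp⟩
  rw [myTr_eq (c • f) (LinearMap.range f) hcf]
  have : ((c • f).restrict (p := LinearMap.range f) fun x _ =>
        hcf (LinearMap.mem_range_self (c • f) x)) =
      c • (f.restrict (p := LinearMap.range f) fun x _ => LinearMap.mem_range_self f x) := by
    ext x
    simp [LinearMap.restrict_coe_apply]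
  rw [this, map_smul, myTr, smul_eq_mul]


lemma myTr_mul_comm (φ ψ : Module.End F V) [FiniteDimensional F (LinearMap.range φ)] :
    myTr (φ * ψ) = myTr (ψ * φ) := by
  classical
  -- a finite-dimensional complement of the kernel
  obtain ⟨D, hD⟩ := Submodule.exists_isCompl (LinearMap.ker φ)
  haveI : FiniteDimensional F D := by
    have e1 : (V ⧸ LinearMap.ker φ) ≃ₗ[F] D :=
      Submodule.quotientEquivOfIsCompl _ _ hD
    have e2 : (V ⧸ LinearMap.ker φ) ≃ₗ[F] LinearMap.range φ := φ.quotKerEquivRange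
    exact Module.Finite.equiv (e2.symm.trans e1)
  set U : Submodule F V :=
    D ⊔ (LinearMap.range φ ⊔ Submodule.map ψ (LinearMap.range φ)) with hUdef
  haveI : FiniteDimensional F U := inferInstance
  have hrφ : LinearMap.range φ ≤ U := le_sup_of_le_right le_sup_left
  have hmψ : Submodule.map ψ (LinearMap.range φ) ≤ U := le_sup_of_le_right le_sup_right
  have hDU : D ≤ U := le_sup_left
  -- find a complement K of U inside ker φ
  obtain ⟨K₀, hK₀⟩ := Submodule.exists_isCompl
    (Submodule.comap (LinearMap.ker φ).subtype U)
  set K : Submodule F V := Submodule.map (LinearMap.ker φ).subtype K₀ with hKdef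
  have hKker : K ≤ LinearMap.ker φ := by
    rintro x ⟨⟨y, hy⟩, _, rfl⟩; exact hy
  have hUK : IsCompl U K := by
    constructor
    · rw [disjoint_iff]
      ext x
      simp only [Submodule.mem_inf, Submodule.mem_bot]
      constructor
      · rintro ⟨hxU, hxK⟩
        obtain ⟨⟨y, hy⟩, hyK₀, rfl⟩ := hxK
        have : (⟨y, hy⟩ : LinearMap.ker φ) ∈
            Submodule.comap (LinearMap.ker φ).subtype U ⊓ K₀ := ⟨hxU, hyK₀⟩
        rw [disjoint_iff.mp hK₀.disjoint] at this
        simpa using congrArg Subtype.val this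
      · rintro rfl; exact ⟨zero_mem _, zero_mem _⟩
    · rw [codisjoint_iff, eq_top_iff]
      have hker : LinearMap.ker φ ≤ U ⊔ K := by
        intro y hy
        have : (⟨y, hy⟩ : LinearMap.ker φ) ∈
            Submodule.comap (LinearMap.ker φ).subtype U ⊔ K₀ := by
          rw [codisjoint_iff.mp hK₀.codisjoint]; trivial
        obtain ⟨a, ha, b, hb, hab⟩ := Submodule.mem_sup.mp this
        have : y = (a : V) + (b : V) := by
          have := congrArg Subtype.val hab
          simpa using this.symm
        rw [this]
        exact add_mem (Submodule.mem_sup_left ha)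
          (Submodule.mem_sup_right ⟨b, hb, rfl⟩)
      have htop : LinearMap.ker φ ⊔ U = ⊤ := by
        rw [eq_top_iff, ← codisjoint_iff.mp hD.codisjoint]
        exact sup_le le_sup_left (le_trans hDU le_sup_right)
      calc (⊤ : Submodule F V) = LinearMap.ker φ ⊔ U := htop.symm
        _ ≤ (U ⊔ K) ⊔ U := sup_le_sup_right hker U
        _ ≤ U ⊔ K := sup_le le_rfl le_sup_left
  set π : V →ₗ[F] U := Submodule.linearProjOfIsCompl U K hUK with hπdef
  have hπfix : ∀ x : V, ∀ hx : x ∈ U, ((π x : U) : V) = x := by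
    intro x hx
    have := Submodule.linearProjOfIsCompl_apply_left hUK ⟨x, hx⟩
    exact congrArg Subtype.val this
  have hφπ : ∀ v : V, φ ((π v : U) : V) = φ v := by
    intro v
    have hsum : ((π v : U) : V) + ((Submodule.linearProjOfIsCompl K U hUK.symm v : K) : V) = v :=
      Submodule.projection_add_projection_eq_self hUK v
    have hk : ((Submodule.linearProjOfIsCompl K U hUK.symm v : K) : V) ∈ LinearMap.ker φ :=
      hKker (Submodule.linearProjOfIsCompl K U hUK.symm v).2
    calc φ ((π v : U) : V)
        = φ ((π v : U) : V) + φ ((Submodule.linearProjOfIsCompl K U hUK.symm v : K) : V) := by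
          rw [LinearMap.mem_ker.mp hk, add_zero]
      _ = φ v := by rw [← map_add, hsum]
  set A : U →ₗ[F] U := π ∘ₗ ψ ∘ₗ U.subtype with hAdef
  have hφU : ∀ x ∈ U, φ x ∈ U := fun x _ => hrφ (LinearMap.mem_range_self φ x)
  set B : U →ₗ[F] U := φ.restrict hφU with hBdef
  have hrφψ : LinearMap.range (φ * ψ) ≤ U := by
    rintro x ⟨y, rfl⟩; exact hrφ (LinearMap.mem_range_self φ (ψ y))
  have hrψφ : LinearMap.range (ψ * φ) ≤ U := by
    rintro x ⟨y, rfl⟩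
    exact hmψ ⟨φ y, LinearMap.mem_range_self φ y, rfl⟩
  have hBA : ((φ * ψ).restrict (p := U) fun x _ =>
      hrφψ (LinearMap.mem_range_self (φ * ψ) x)) = B ∘ₗ A := by
    ext x
    show ((φ * ψ) (x : V)) = φ ((π (ψ (x : V)) : U) : V)
    rw [hφπ]; rfl
  have hAB : ((ψ * φ).restrict (p := U) fun x _ =>
      hrψφ (LinearMap.mem_range_self (ψ * φ) x)) = A ∘ₗ B := by
    ext x
    show ((ψ * φ) (x : V)) = ((π (ψ (φ (x : V))) : U) : V)
    rw [hπfix (ψ (φ (x : V))) (hmψ ⟨φ (x : V), LinearMap.mem_range_self φ _, rfl⟩)]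
    rfl
  rw [myTr_eq (φ * ψ) U hrφψ, myTr_eq (ψ * φ) U hrψφ, hBA, hAB]
  have : B ∘ₗ A = B * A := rfl
  rw [this]
  have : A ∘ₗ B = A * B := rfl
  rw [this, LinearMap.trace_mul_comm]

/-- rank-one operator `v ↦ ξ v • w`. -/
noncomputable def genE (w : V) (ξ : V →ₗ[F] F) : Module.End F V := ξ.smulRight w

lemma genE_apply (w : V) (ξ : V →ₗ[F] F) (v : V) : genE w ξ v = ξ v • w := rfl

lemma genE_range (w : V) (ξ : V →ₗ[F] F) :
    LinearMap.range (genE w ξ) ≤ Submodule.span F {w} := by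
  rintro x ⟨y, rfl⟩
  exact Submodule.smul_mem _ _ (Submodule.mem_span_singleton_self w)

lemma genE_rank (w : V) (ξ : V →ₗ[F] F) : LinearMap.rank (genE w ξ) < ℵ₀ := by
  have h1 : LinearMap.rank (genE w ξ) ≤ Module.rank F (Submodule.span F {w}) :=
    Submodule.rank_mono (genE_range w ξ)
  have h2 : Module.rank F (Submodule.span F ({w} : Set V)) ≤ 1 := by
    simpa using rank_span_le (R := F) ({w} : Set V)
  exact lt_of_le_of_lt (h1.trans h2) one_lt_aleph0

lemma genE_comm (a : V) (α : V →ₗ[F] F) (b : V) (β : V →ₗ[F] F) :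
    genE a α * genE b β - genE b β * genE a α = α b • genE a β - β a • genE b α := by
  ext v
  simp only [LinearMap.sub_apply, Module.End.mul_apply, LinearMap.smul_apply,
    genE_apply, map_smul, smul_eq_mul, smul_smul]
  ring_nf

lemma genE_sub_mem (u : V) (η : V →ₗ[F] F) (hηu : η u = 1) (w : V) (ξ : V →ₗ[F] F) :
    genE w ξ - ξ w • genE u η ∈ Submodule.span F {x : Module.End F V |
      ∃ φ ψ : Module.End F V, LinearMap.rank φ < ℵ₀ ∧ x = φ * ψ - ψ * φ} := by
  apply Submodule.subset_span
  refine ⟨genE w η, genE u ξ, genE_rank w η, ?_⟩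
  rw [genE_comm w η u ξ, hηu, one_smul]

lemma exists_eta (u : V) (hu : u ≠ 0) : ∃ η : V →ₗ[F] F, η u = 1 := by
  obtain ⟨K, hK⟩ := Submodule.exists_isCompl (Submodule.span F {u})
  refine ⟨(LinearEquiv.coord F V u hu).toLinearMap ∘ₗ
    Submodule.linearProjOfIsCompl _ K hK, ?_⟩
  have h1 : Submodule.linearProjOfIsCompl _ K hK u =
      ⟨u, Submodule.mem_span_singleton_self u⟩ :=
    Submodule.linearProjOfIsCompl_apply_left hK ⟨u, Submodule.mem_span_singleton_self u⟩
  simp only [LinearMap.comp_apply, h1, LinearEquiv.coe_coe]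
  exact LinearEquiv.coord_self F V u hu

lemma myTr_genE_self (u : V) (hu : u ≠ 0) (η : V →ₗ[F] F) (hηu : η u = 1) :
    myTr (genE u η) = 1 := by
  have hr : LinearMap.range (genE u η) ≤ Submodule.span F {u} := genE_range u η
  rw [myTr_eq (genE u η) (Submodule.span F {u}) hr]
  have : ((genE u η).restrict (p := Submodule.span F {u}) fun x _ =>
      hr (LinearMap.mem_range_self (genE u η) x)) = LinearMap.id := by
    ext x
    obtain ⟨c, hc⟩ := Submodule.mem_span_singleton.mp x.2
    show genE u η (x : V) = (x : V)
    rw [← hc, genE_apply, map_smul, smul_eq_mul, hηu, mul_one]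
  rw [this, LinearMap.trace_id]
  rw [finrank_span_singleton hu, Nat.cast_one]

lemma decomp (u : V) (η : V →ₗ[F] F) (hηu : η u = 1) (f : Module.End F V)
    (hf : LinearMap.rank f < ℵ₀) :
    f ∈ (Submodule.span F {x : Module.End F V |
        ∃ φ ψ : Module.End F V, LinearMap.rank φ < ℵ₀ ∧ x = φ * ψ - ψ * φ}) ⊔
      Submodule.span F {genE u η} := by
  haveI : FiniteDimensional F (LinearMap.range f) := Module.rank_lt_aleph0_iff.mp hf
  set b : Module.Basis (Fin (Module.finrank F (LinearMap.range f))) F (LinearMap.range f) :=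
    Module.finBasis F _ with hbdef
  set g : V →ₗ[F] LinearMap.range f :=
    f.codRestrict _ (fun x => LinearMap.mem_range_self f x) with hgdef
  have hf_eq : f = ∑ j, genE ((b j : V)) ((b.coord j) ∘ₗ g) := by
    ext v
    have hrepr := b.sum_repr (g v)
    calc f v = ((g v : LinearMap.range f) : V) := rfl
      _ = ((∑ j, b.repr (g v) j • b j : LinearMap.range f) : V) := by rw [hrepr]
      _ = ∑ j, b.repr (g v) j • ((b j : V)) := by
          push_cast
          rfl
      _ = (∑ j, genE (b j : V) ((b.coord j) ∘ₗ g)) v := by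
          simp [genE_apply, Module.Basis.coord_apply, LinearMap.sum_apply]
  rw [hf_eq]
  refine Submodule.sum_mem _ fun j _ => ?_
  have hsplit : genE (b j : V) (b.coord j ∘ₗ g) =
      (genE (b j : V) (b.coord j ∘ₗ g) - ((b.coord j ∘ₗ g) (b j : V)) • genE u η) +
      ((b.coord j ∘ₗ g) (b j : V)) • genE u η := (sub_add_cancel _ _).symm
  rw [hsplit]
  exact add_mem
    (Submodule.mem_sup_left (genE_sub_mem u η hηu _ _))
    (Submodule.mem_sup_right (Submodule.smul_mem _ _ (Submodule.mem_span_singleton_self _)))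

lemma rank_neg' (f : Module.End F V) : LinearMap.rank (-f) = LinearMap.rank f := by
  unfold LinearMap.rank
  rw [LinearMap.range_neg]

lemma myTr_neg (f : Module.End F V) [FiniteDimensional F (LinearMap.range f)] :
    myTr (-f) = - myTr f := by
  have h : -f = (-1 : F) • f := by rw [neg_one_smul]
  rw [h, myTr_smul, neg_one_mul]

lemma myTr_sub (f g : Module.End F V) [FiniteDimensional F (LinearMap.range f)]
    [FiniteDimensional F (LinearMap.range g)] :
    myTr (f - g) = myTr f - myTr g := by
  haveI : FiniteDimensional F (LinearMap.range (-g)) := by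
    rw [LinearMap.range_neg]; infer_instance
  rw [sub_eq_add_neg, myTr_add f (-g), myTr_neg, ← sub_eq_add_neg]

lemma myTr_commutator (φ ψ : Module.End F V) (hφ : LinearMap.rank φ < ℵ₀) :
    LinearMap.rank (φ * ψ - ψ * φ) < ℵ₀ ∧ myTr (φ * ψ - ψ * φ) = 0 := by
  haveI : FiniteDimensional F (LinearMap.range φ) := Module.rank_lt_aleph0_iff.mp hφ
  have h1 : LinearMap.rank (φ * ψ) < ℵ₀ :=
    lt_of_le_of_lt (LinearMap.rank_comp_le_left ψ φ) hφ
  have h2 : LinearMap.rank (ψ * φ) < ℵ₀ :=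
    lt_of_le_of_lt (LinearMap.rank_comp_le_right φ ψ) hφ
  haveI : FiniteDimensional F (LinearMap.range (φ * ψ)) := Module.rank_lt_aleph0_iff.mp h1
  haveI : FiniteDimensional F (LinearMap.range (ψ * φ)) := Module.rank_lt_aleph0_iff.mp h2
  constructor
  · rw [sub_eq_add_neg]
    refine lt_of_le_of_lt (LinearMap.rank_add_le _ _) (Cardinal.add_lt_of_lt le_rfl h1 ?_)
    rw [rank_neg']; exact h2
  · rw [myTr_sub, myTr_mul_comm φ ψ, sub_self]

end Aux


set_option maxHeartbeats 1000000 in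
/-- `[I_{ℵ₀}, gl(V)]` has codimension `2` in `F·Id + I_{ℵ₀}`. -/
theorem codim_two (hV : ℵ₀ ≤ Module.rank F V) :
    Module.rank F
      (↥(Submodule.span F {(1 : Module.End F V)} ⊔ rankIdeal F V ℵ₀ le_rfl) ⧸
        Submodule.comap
          (Submodule.span F {(1 : Module.End F V)} ⊔ rankIdeal F V ℵ₀ le_rfl).subtype
          (Submodule.span F {x : Module.End F V | ∃ φ ψ : Module.End F V,
            LinearMap.rank φ < ℵ₀ ∧ x = φ * ψ - ψ * φ})) = 2 := by
  classical
  set I := rankIdeal F V ℵ₀ le_rfl with hIdef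
  set C := Submodule.span F {x : Module.End F V | ∃ φ ψ : Module.End F V,
      LinearMap.rank φ < ℵ₀ ∧ x = φ * ψ - ψ * φ} with hCdef
  set W := Submodule.span F {(1 : Module.End F V)} ⊔ I with hWdef
  have hCfact : ∀ x ∈ C, LinearMap.rank x < ℵ₀ ∧ myTr x = 0 := by
    intro x hx
    induction hx using Submodule.span_induction with
    | mem x hx =>
        obtain ⟨φ, ψ, hφ, rfl⟩ := hx
        exact myTr_commutator φ ψ hφ
    | zero =>
        refine ⟨?_, myTr_zero⟩
        rw [LinearMap.rank_zero]
        exact aleph0_pos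
    | add x y hx hy ihx ihy =>
        haveI : FiniteDimensional F (LinearMap.range x) := Module.rank_lt_aleph0_iff.mp ihx.1
        haveI : FiniteDimensional F (LinearMap.range y) := Module.rank_lt_aleph0_iff.mp ihy.1
        refine ⟨lt_of_le_of_lt (LinearMap.rank_add_le _ _)
          (Cardinal.add_lt_of_lt le_rfl ihx.1 ihy.1), ?_⟩
        rw [myTr_add, ihx.2, ihy.2, add_zero]
    | smul c x hx ihx =>
        haveI : FiniteDimensional F (LinearMap.range x) := Module.rank_lt_aleph0_iff.mp ihx.1
        constructor
        · have h : LinearMap.range (c • x) ≤ LinearMap.range x := by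
            rintro z ⟨y, rfl⟩; exact ⟨c • y, by simp⟩
          exact lt_of_le_of_lt (Submodule.rank_mono h) ihx.1
        · rw [myTr_smul, ihx.2, mul_zero]
  have hne : ∃ u : V, u ≠ 0 := by
    have : 0 < Module.rank F V := lt_of_lt_of_le aleph0_pos hV
    exact rank_pos_iff_exists_ne_zero.mp this
  obtain ⟨u, hu⟩ := hne
  obtain ⟨η, hηu⟩ := exists_eta (F := F) u hu
  set P : Module.End F V := genE u η with hPdef
  haveI : FiniteDimensional F (LinearMap.range P) :=
    Module.rank_lt_aleph0_iff.mp (genE_rank u η)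
  have hPI : P ∈ I := genE_rank u η
  have h1W : (1 : Module.End F V) ∈ W :=
    Submodule.mem_sup_left (Submodule.mem_span_singleton_self _)
  have hPW : P ∈ W := Submodule.mem_sup_right hPI
  have hCI : C ≤ I := fun x hx => (hCfact x hx).1
  set q1 := Submodule.Quotient.mk (p := Submodule.comap W.subtype C)
    (⟨1, h1W⟩ : W) with hq1
  set q2 := Submodule.Quotient.mk (p := Submodule.comap W.subtype C)
    (⟨P, hPW⟩ : W) with hq2
  have hli : LinearIndependent F ![q1, q2] := by
    rw [LinearIndependent.pair_iff]
    intro s t hst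
    have hmem : s • (1 : Module.End F V) + t • P ∈ C := by
      have hmk : (s • (⟨1, h1W⟩ : W) + t • (⟨P, hPW⟩ : W)) ∈
          Submodule.comap W.subtype C := by
        rw [← Submodule.Quotient.mk_eq_zero, Submodule.Quotient.mk_add,
          Submodule.Quotient.mk_smul, Submodule.Quotient.mk_smul, ← hq1, ← hq2]
        exact hst
      simpa using hmk
    have hs : s = 0 := by
      by_contra hs
      have hrange : LinearMap.range (s • (1 : Module.End F V)) = ⊤ := by
        rw [LinearMap.range_eq_top]
        intro y
        exact ⟨s⁻¹ • y, by simp [smul_smul, inv_mul_cancel₀ hs]⟩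
      have h1I : s • (1 : Module.End F V) ∈ I := by
        have h2 : s • (1 : Module.End F V) =
            (s • (1 : Module.End F V) + t • P) - t • P := by abel
        rw [h2]
        exact sub_mem (hCI hmem) (Submodule.smul_mem _ _ hPI)
      have h3 : Module.rank F (⊤ : Submodule F V) < ℵ₀ := by
        rw [← hrange]
        exact h1I
      rw [rank_top] at h3
      exact absurd hV (not_le.mpr h3)
    refine ⟨hs, ?_⟩
    rw [hs] at hmem
    have h4 : t • P ∈ C := by simpa using hmem
    have htr2 := (hCfact _ h4).2
    rw [myTr_smul, myTr_genE_self u hu η hηu, mul_one] at htr2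
    exact htr2
  have hsp : ⊤ ≤ Submodule.span F (Set.range ![q1, q2]) := by
    rintro z -
    obtain ⟨y, rfl⟩ := Submodule.mkQ_surjective _ z
    have hy2 : (y : Module.End F V) ∈ Submodule.span F {(1 : Module.End F V)} ⊔ I := y.2
    obtain ⟨sI, hsI, i, hi, hyi⟩ := Submodule.mem_sup.mp hy2
    obtain ⟨a, ha⟩ := Submodule.mem_span_singleton.mp hsI
    have hiI : LinearMap.rank i < ℵ₀ := hi
    have hdec := decomp u η hηu i hiI
    rw [← hCdef, ← hPdef] at hdec
    obtain ⟨c, hc, p, hp, hcp⟩ := Submodule.mem_sup.mp hdec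
    obtain ⟨d, hd⟩ := Submodule.mem_span_singleton.mp hp
    have hcW : c ∈ W := Submodule.mem_sup_right (hCI hc)
    have hy : y = a • (⟨1, h1W⟩ : W) + (⟨c, hcW⟩ : W) + d • (⟨P, hPW⟩ : W) := by
      apply Subtype.ext
      show (y : Module.End F V) = a • 1 + c + d • P
      rw [← hyi, ← ha, ← hcp, ← hd]
      abel
    have hc0 : Submodule.Quotient.mk (p := Submodule.comap W.subtype C)
        (⟨c, hcW⟩ : W) = 0 :=
      (Submodule.Quotient.mk_eq_zero _).mpr hc
    rw [Submodule.mkQ_apply, hy, Submodule.Quotient.mk_add, Submodule.Quotient.mk_add,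
      Submodule.Quotient.mk_smul, Submodule.Quotient.mk_smul, hc0, add_zero,
      ← hq1, ← hq2]
    exact add_mem
      (Submodule.smul_mem _ _ (Submodule.subset_span ⟨0, rfl⟩))
      (Submodule.smul_mem _ _ (Submodule.subset_span ⟨1, rfl⟩))
  let bQ := Module.Basis.mk hli hsp
  rw [rank_eq_card_basis bQ]
  simp
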